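/- Let L ≥ 1 be an integer, let S¹ = {x ∈ ℝ² : ‖x‖₂ = 1}, let X be uniformly distributed on S¹, let f : S¹ → {1, …, L} be any measurable encoding map, and let g : {1, …, L} → S¹ be any decoding map. Then E[‖X - g(f(X))‖₂²] ≥ 2 - 2 · sin(π/L)/(π/L). -/

import Mathlib

open MeasureTheory Metric Real

open Set
open scoped RealInnerProductSpace Pointwise

abbrev E2 := EuclideanSpace ℝ (Fin 2)
abbrev Sph := sphere (0 : E2) 1

noncomputable def cpt (θ : ℝ) : E2 :=
  (WithLp.equiv 2 (Fin 2 → ℝ)).symm ![Real.cos θ, Real.sin θ]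

lemma cpt_norm (θ : ℝ) : ‖cpt θ‖ = 1 := by
  rw [EuclideanSpace.norm_eq]
  simp [cpt, Fin.sum_univ_two, Real.sin_sq_add_cos_sq]

noncomputable def cmap (θ : ℝ) : Sph := ⟨cpt θ, by simp [mem_sphere_iff_norm, cpt_norm]⟩

noncomputable def Fme : E2 ≃ᵐ ℝ × ℝ :=
  (MeasurableEquiv.toLp 2 (Fin 2 → ℝ)).symm.trans MeasurableEquiv.finTwoArrow

lemma Fme_mp : MeasurePreserving Fme volume volume :=
  (volume_preserving_finTwoArrow ℝ).comp (EuclideanSpace.volume_preserving_symm_measurableEquiv_toLp (Fin 2))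

lemma Fme_symm_eq (r θ : ℝ) : Fme.symm (r * Real.cos θ, r * Real.sin θ) = r • cpt θ := by
  ext i; fin_cases i <;> rfl

lemma cone_char (s : Set Sph) :
    (Ioo (0:ℝ) 1 • (Subtype.val '' s) : Set E2)
      = {x : E2 | ‖x‖ ∈ Ioo (0:ℝ) 1 ∧ ‖x‖⁻¹ • x ∈ (Subtype.val '' s : Set E2)} := by
  ext x
  constructor
  · rintro ⟨t, ht, y, hy, rfl⟩
    have hy1 : ‖y‖ = 1 := by
      rcases hy with ⟨z, hz, rfl⟩; simpa using z.2
    have hn : ‖t • y‖ = t := by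
      rw [norm_smul, hy1, mul_one, Real.norm_eq_abs, abs_of_pos ht.1]
    refine ⟨by rw [hn]; exact ht, ?_⟩
    rw [hn, smul_smul, inv_mul_cancel₀ ht.1.ne', one_smul]
    exact hy
  · rintro ⟨h1, h2⟩
    refine ⟨‖x‖, h1, ‖x‖⁻¹ • x, h2, ?_⟩
    show ‖x‖ • ‖x‖⁻¹ • x = x
    rw [smul_smul, mul_inv_cancel₀ (ne_of_gt h1.1), one_smul]

lemma cone_measurable {s : Set Sph} (hs : MeasurableSet s) :
    MeasurableSet (Ioo (0:ℝ) 1 • (Subtype.val '' s) : Set E2) := by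
  rw [cone_char]
  have himg : MeasurableSet ((Subtype.val '' s : Set E2)) :=
    (MeasurableEmbedding.subtype_coe (isClosed_sphere.measurableSet)).measurableSet_image.2 hs
  have h1 : MeasurableSet {x : E2 | ‖x‖ ∈ Ioo (0:ℝ) 1} :=
    measurable_norm measurableSet_Ioo
  have h2 : MeasurableSet {x : E2 | ‖x‖⁻¹ • x ∈ (Subtype.val '' s : Set E2)} :=
    (measurable_norm.inv.smul measurable_id) himg
  exact h1.inter h2

lemma polar_vol {B : Set (ℝ × ℝ)} {T : Set ℝ} (hB : MeasurableSet B)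
    (hBfin : volume B ≠ ⊤) (hT : MeasurableSet T) (hTsub : T ⊆ Ioo (-π) π)
    (hiff : ∀ p ∈ polarCoord.target, (polarCoord.symm p ∈ B ↔ p.1 ∈ Ioo (0:ℝ) 1 ∧ p.2 ∈ T)) :
    volume B = volume T / 2 := by
  have hTfin : volume T ≠ ⊤ :=
    (lt_of_le_of_lt (measure_mono hTsub) measure_Ioo_lt_top).ne
  have key : (volume B).toReal = (volume T).toReal / 2 := by
    have h1 : ∫ p : ℝ × ℝ, B.indicator (fun _ => (1:ℝ)) p = (volume B).toReal := by
      rw [integral_indicator hB]; simp; rfl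
    rw [← integral_comp_polarCoord_symm (B.indicator (fun _ => (1:ℝ)))] at h1
    have hC : MeasurableSet (Ioo (0:ℝ) 1 ×ˢ T) := measurableSet_Ioo.prod hT
    have h2 : ∫ p in polarCoord.target, p.1 • B.indicator (fun _ => (1:ℝ)) (polarCoord.symm p)
        = ∫ p in polarCoord.target, (Ioo (0:ℝ) 1 ×ˢ T).indicator (fun p : ℝ × ℝ => p.1) p := by
      refine setIntegral_congr_fun polarCoord.open_target.measurableSet fun p hp => ?_
      by_cases hmem : p.1 ∈ Ioo (0:ℝ) 1 ∧ p.2 ∈ T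
      · rw [indicator_of_mem ((hiff p hp).2 hmem), indicator_of_mem (by exact hmem)]
        simp
      · rw [indicator_of_notMem (fun h => hmem ((hiff p hp).1 h)),
          indicator_of_notMem (by exact hmem)]
        simp
    have hsub : Ioo (0:ℝ) 1 ×ˢ T ⊆ polarCoord.target := by
      rintro ⟨r, θ⟩ ⟨hr, hθ⟩
      exact ⟨hr.1, hTsub hθ⟩
    have h3 : ∫ p in polarCoord.target, (Ioo (0:ℝ) 1 ×ˢ T).indicator (fun p : ℝ × ℝ => p.1) p
        = ∫ p in Ioo (0:ℝ) 1 ×ˢ T, (fun p : ℝ × ℝ => p.1) p := by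
      rw [setIntegral_indicator hC, inter_eq_self_of_subset_right hsub]
    have hint : IntegrableOn (fun p : ℝ × ℝ => p.1) (Ioo (0:ℝ) 1 ×ˢ T) volume := by
      refine Measure.integrableOn_of_bounded ?_ (continuous_fst.aestronglyMeasurable) (M := 1) ?_
      · rw [Measure.volume_eq_prod, Measure.prod_prod]
        exact ENNReal.mul_ne_top measure_Ioo_lt_top.ne hTfin
      · refine ae_restrict_of_forall_mem hC fun p hp => ?_
        have := hp.1
        rw [Real.norm_eq_abs, abs_of_pos this.1]
        exact this.2.le
    have h4 : ∫ p in Ioo (0:ℝ) 1 ×ˢ T, (fun p : ℝ × ℝ => p.1) p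
        = (volume T).toReal / 2 := by
      rw [Measure.volume_eq_prod] at hint ⊢
      rw [setIntegral_prod _ hint]
      simp only [integral_const, MeasurableSet.univ, Measure.restrict_apply, univ_inter,
        smul_eq_mul]
      rw [integral_const_mul]
      have : ∫ x in Ioo (0:ℝ) 1, x = 1/2 := by
        rw [← integral_Ioc_eq_integral_Ioo, ← intervalIntegral.integral_of_le zero_le_one]
        simp [integral_id]
      rw [this, Measure.real_def, Measure.restrict_apply_univ]; ring
    rw [h2, h3, h4] at h1
    linarith [h1]
  have := ENNReal.ofReal_toReal hBfin
  rw [← this, key, ENNReal.ofReal_div_of_pos (by norm_num), ENNReal.ofReal_toReal hTfin]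
  norm_num

lemma cone_vol {s : Set Sph} (hs : MeasurableSet s) :
    volume (Ioo (0:ℝ) 1 • (Subtype.val '' s) : Set E2)
      = volume (cmap ⁻¹' s ∩ Ioo (-π) π) / 2 := by
  set A : Set E2 := Ioo (0:ℝ) 1 • (Subtype.val '' s) with hA
  have hAm : MeasurableSet A := cone_measurable hs
  set B : Set (ℝ × ℝ) := Fme.symm ⁻¹' A with hBdef
  have hBm : MeasurableSet B := Fme.symm.measurable hAm
  have hvolB : volume B = volume A := (Fme_mp.symm Fme).measure_preimage hAm.nullMeasurableSet
  have hAfin : volume A ≠ ⊤ := by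
    have hsub2 : A ⊆ ball (0 : E2) 1 := by
      intro x hx
      rw [hA, cone_char] at hx
      exact mem_ball_zero_iff.2 hx.1.2
    exact (lt_of_le_of_lt (measure_mono hsub2) measure_ball_lt_top).ne
  have hcm : Continuous cmap := by
    rw [continuous_induced_rng]
    apply (PiLp.continuous_toLp 2 (fun _ : Fin 2 => ℝ)).comp
    refine continuous_pi fun i => ?_
    fin_cases i
    · exact Real.continuous_cos
    · exact Real.continuous_sin
  have hTm : MeasurableSet (cmap ⁻¹' s ∩ Ioo (-π) π) :=
    (hcm.measurable hs).inter measurableSet_Ioo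
  rw [← hvolB]
  refine polar_vol hBm (hvolB.symm ▸ hAfin) hTm inter_subset_right fun p hp => ?_
  have hp1 : (0:ℝ) < p.1 := hp.1
  have hsymm : (polarCoord.symm p : ℝ × ℝ) = (p.1 * Real.cos p.2, p.1 * Real.sin p.2) := rfl
  have hmemB : polarCoord.symm p ∈ B ↔ (p.1 • cpt p.2) ∈ A := by
    rw [hBdef, mem_preimage, hsymm, Fme_symm_eq]
  rw [hmemB, hA, cone_char]
  have hnorm : ‖p.1 • cpt p.2‖ = p.1 := by
    rw [norm_smul, cpt_norm, mul_one, Real.norm_eq_abs, abs_of_pos hp1]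
  constructor
  · rintro ⟨h1, h2⟩
    rw [hnorm] at h1 h2
    rw [smul_smul, inv_mul_cancel₀ hp1.ne', one_smul] at h2
    rcases h2 with ⟨z, hz, hzeq⟩
    have hzc : z = cmap p.2 := Subtype.ext hzeq
    exact ⟨h1, ⟨show cmap p.2 ∈ s from hzc ▸ hz, hp.2⟩⟩
  · rintro ⟨h1, hmem, _⟩
    refine ⟨by rw [hnorm]; exact h1, ?_⟩
    rw [hnorm, smul_smul, inv_mul_cancel₀ hp1.ne', one_smul]
    exact ⟨cmap p.2, hmem, rfl⟩

/-- The uniform probability measure on the unit circle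
`S¹ = {x ∈ ℝ² : ‖x‖₂ = 1}` (the normalized sphere measure). -/
noncomputable def sphereUniform :
    Measure (sphere (0 : EuclideanSpace ℝ (Fin 2)) 1) :=
  ((volume : Measure (EuclideanSpace ℝ (Fin 2))).toSphere Set.univ)⁻¹ •
    (volume : Measure (EuclideanSpace ℝ (Fin 2))).toSphere

lemma cont_cmap : Continuous cmap := by
  rw [continuous_induced_rng]
  apply (PiLp.continuous_toLp 2 (fun _ : Fin 2 => ℝ)).comp
  refine continuous_pi fun i => ?_
  fin_cases i
  · exact Real.continuous_cos
  · exact Real.continuous_sin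

lemma toSphere_eq {s : Set Sph} (hs : MeasurableSet s) :
    (volume : Measure E2).toSphere s = volume (cmap ⁻¹' s ∩ Ioo (-π) π) := by
  rw [Measure.toSphere_apply' _ hs, cone_vol hs, finrank_euclideanSpace_fin]
  push_cast
  rw [ENNReal.mul_div_cancel' (by norm_num) (by norm_num)]

lemma toSphere_univ :
    (volume : Measure E2).toSphere Set.univ = ENNReal.ofReal (2 * π) := by
  rw [toSphere_eq MeasurableSet.univ]
  simp [Real.volume_Ioo, two_mul]

lemma sphereUniform_apply {s : Set Sph} (hs : MeasurableSet s) :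
    sphereUniform s = (ENNReal.ofReal (2 * π))⁻¹ * volume (cmap ⁻¹' s ∩ Ioo (-π) π) := by
  rw [sphereUniform, Measure.smul_apply, smul_eq_mul, toSphere_univ, toSphere_eq hs]

lemma sphereUniform_eq_map :
    sphereUniform = Measure.map cmap
      ((ENNReal.ofReal (2 * π))⁻¹ • (volume : Measure ℝ).restrict (Ioo (-π) π)) := by
  refine Measure.ext fun s hs => ?_
  rw [Measure.map_apply cont_cmap.measurable hs, Measure.smul_apply,
    Measure.restrict_apply (cont_cmap.measurable hs), smul_eq_mul, sphereUniform_apply hs]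

lemma twopi_ne_zero : ENNReal.ofReal (2 * π) ≠ 0 := by
  simp [Real.pi_pos, mul_pos]

instance : IsProbabilityMeasure sphereUniform := by
  constructor
  rw [sphereUniform_apply MeasurableSet.univ]
  simp only [Set.preimage_univ, Set.univ_inter, Real.volume_Ioo]
  rw [show π - -π = 2 * π by ring]
  exact ENNReal.inv_mul_cancel twopi_ne_zero ENNReal.ofReal_ne_top

lemma integral_sphereUniform {h : Sph → ℝ} (hm : AEStronglyMeasurable h sphereUniform) :
    ∫ x, h x ∂sphereUniform = (2 * π)⁻¹ * ∫ θ in Ioo (-π) π, h (cmap θ) := by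
  rw [sphereUniform_eq_map] at hm ⊢
  rw [integral_map cont_cmap.measurable.aemeasurable hm, integral_smul_measure]
  simp [ENNReal.toReal_inv, ENNReal.toReal_ofReal (by positivity : (0:ℝ) ≤ 2*π), Real.pi_pos.le]
lemma oneD (α a : ℝ) (ha : a ∈ Icc 0 π) :
    ∫ θ in Ioo (-π) π, max (Real.cos (θ - α) - Real.cos a) 0
      = 2 * Real.sin a - 2 * a * Real.cos a := by
  have hcg : Continuous fun θ : ℝ => max (Real.cos θ - Real.cos a) 0 :=
    (Real.continuous_cos.sub continuous_const).max continuous_const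
  have hper : Function.Periodic (fun θ : ℝ => max (Real.cos θ - Real.cos a) 0) (2 * π) := by
    intro x; simp [Real.cos_add_two_pi]
  have h0 : ∫ θ in Ioo (-π) π, max (Real.cos (θ - α) - Real.cos a) 0
      = ∫ θ in (-π)..π, max (Real.cos (θ - α) - Real.cos a) 0 := by
    rw [intervalIntegral.integral_of_le (by linarith [Real.pi_pos] : -π ≤ π),
      integral_Ioc_eq_integral_Ioo]
  have hcomp := intervalIntegral.integral_comp_sub_right
    (a := -π) (b := π) (fun t => max (Real.cos t - Real.cos a) 0) α
  rw [h0, hcomp]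
  have hshift : ∫ θ in (-π - α)..(π - α), max (Real.cos θ - Real.cos a) 0
      = ∫ θ in (-π)..π, max (Real.cos θ - Real.cos a) 0 := by
    have := hper.intervalIntegral_add_eq (-π - α) (-π)
    rw [show -π - α + 2 * π = π - α by ring, show -π + 2 * π = π by ring] at this
    exact this
  rw [hshift]
  have ha0 := ha.1
  have haπ := ha.2
  have hsplit1 : ∫ θ in (-π)..(-a), max (Real.cos θ - Real.cos a) 0 = 0 := by
    have heq : EqOn (fun θ : ℝ => max (Real.cos θ - Real.cos a) 0) (fun _ => (0:ℝ))
        (uIcc (-π) (-a)) := by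
      intro θ hθ
      rw [uIcc_of_le (by linarith) ] at hθ
      have h1 : Real.cos θ ≤ Real.cos a := by
        rw [← Real.cos_neg θ]
        exact Real.cos_le_cos_of_nonneg_of_le_pi ha0 (by linarith [hθ.1]) (by linarith [hθ.2])
      simp [max_eq_right (by linarith : Real.cos θ - Real.cos a ≤ 0)]
    rw [intervalIntegral.integral_congr heq]
    simp
  have hsplit3 : ∫ θ in a..π, max (Real.cos θ - Real.cos a) 0 = 0 := by
    have heq : EqOn (fun θ : ℝ => max (Real.cos θ - Real.cos a) 0) (fun _ => (0:ℝ))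
        (uIcc a π) := by
      intro θ hθ
      rw [uIcc_of_le (by linarith)] at hθ
      have h1 : Real.cos θ ≤ Real.cos a :=
        Real.cos_le_cos_of_nonneg_of_le_pi ha0 hθ.2 hθ.1
      simp [max_eq_right (by linarith : Real.cos θ - Real.cos a ≤ 0)]
    rw [intervalIntegral.integral_congr heq]
    simp
  have hsplit2 : ∫ θ in (-a)..a, max (Real.cos θ - Real.cos a) 0
      = 2 * Real.sin a - 2 * a * Real.cos a := by
    have heq : EqOn (fun θ : ℝ => max (Real.cos θ - Real.cos a) 0)
        (fun θ => Real.cos θ - Real.cos a) (uIcc (-a) a) := by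
      intro θ hθ
      rw [uIcc_of_le (by linarith)] at hθ
      have h1 : Real.cos a ≤ Real.cos θ := by
        rcases le_or_gt 0 θ with h | h
        · exact Real.cos_le_cos_of_nonneg_of_le_pi (by linarith [hθ.1]) haπ hθ.2
        · rw [← Real.cos_neg θ]
          exact Real.cos_le_cos_of_nonneg_of_le_pi (by linarith) haπ (by linarith [hθ.1])
      simp [max_eq_left (by linarith : 0 ≤ Real.cos θ - Real.cos a)]
    rw [intervalIntegral.integral_congr heq, intervalIntegral.integral_sub
      (Real.continuous_cos.intervalIntegrable _ _) (intervalIntegrable_const),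
      integral_cos, intervalIntegral.integral_const]
    simp [Real.sin_neg]
    ring
  have hi : ∀ b c : ℝ, IntervalIntegrable (fun θ : ℝ => max (Real.cos θ - Real.cos a) 0)
      volume b c := fun b c => hcg.intervalIntegrable b c
  rw [← intervalIntegral.integral_add_adjacent_intervals (hi (-π) (-a)) (hi (-a) π),
    ← intervalIntegral.integral_add_adjacent_intervals (hi (-a) a) (hi a π),
    hsplit1, hsplit2, hsplit3]
  ring

open scoped RealInnerProductSpace in
lemma inner_cmap (θ ψ : ℝ) : ⟪(cmap θ : E2), (cmap ψ : E2)⟫ = Real.cos (θ - ψ) := by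
  simp [cmap, cpt, PiLp.inner_apply, Fin.sum_univ_two]
  rw [Real.cos_sub]; ring

lemma exists_cmap (u : Sph) : ∃ ψ : ℝ, cmap ψ = u := by
  have hnorm : ‖(u : E2)‖ = 1 := by simpa using u.2
  set z : ℂ := ⟨(u : E2) 0, (u : E2) 1⟩ with hz
  have habs : ‖z‖ = 1 := by
    rw [Complex.norm_def, Complex.normSq_mk]
    rw [EuclideanSpace.norm_eq] at hnorm
    simpa [Fin.sum_univ_two, pow_two] using hnorm
  have hz0 : z ≠ 0 := by
    intro h; rw [h] at habs; simp at habs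
  refine ⟨Complex.arg z, ?_⟩
  apply Subtype.ext
  ext i
  fin_cases i
  · show Real.cos (Complex.arg z) = (u : E2) 0
    rw [Complex.cos_arg hz0, habs]; simp [hz]
  · show Real.sin (Complex.arg z) = (u : E2) 1
    rw [Complex.sin_arg, habs]; simp [hz]

open scoped RealInnerProductSpace in
lemma cont_inner_u (u : Sph) : Continuous fun x : Sph => ⟪(x : E2), (u : E2)⟫ :=
  Continuous.inner continuous_subtype_val continuous_const

lemma integrable_bounded {h : Sph → ℝ} (hm : AEStronglyMeasurable h sphereUniform)
    {C : ℝ} (hb : ∀ x, |h x| ≤ C) : Integrable h sphereUniform := by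
  rw [← integrableOn_univ]
  exact Measure.integrableOn_of_bounded (measure_ne_top _ _) hm
    (ae_of_all _ fun x => by rw [Real.norm_eq_abs]; exact hb x)

open scoped RealInnerProductSpace in
lemma abs_inner_le_one (u x : Sph) : |⟪(x : E2), (u : E2)⟫| ≤ 1 := by
  have := abs_real_inner_le_norm (x : E2) (u : E2)
  have hx : ‖(x : E2)‖ = 1 := by simpa using x.2
  have hu : ‖(u : E2)‖ = 1 := by simpa using u.2
  rw [hx, hu] at this; simpa using this

open scoped RealInnerProductSpace in
lemma sphere_pos_part (u : Sph) (a : ℝ) (ha : a ∈ Icc 0 π) :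
    ∫ x, max (⟪(x : E2), (u : E2)⟫ - Real.cos a) 0 ∂sphereUniform
      = (Real.sin a - a * Real.cos a) / π := by
  obtain ⟨ψ, rfl⟩ := exists_cmap u
  have hcont : Continuous fun x : Sph => max (⟪(x : E2), (cmap ψ : E2)⟫ - Real.cos a) 0 :=
    ((cont_inner_u (cmap ψ)).sub continuous_const).max continuous_const
  rw [integral_sphereUniform hcont.aestronglyMeasurable]
  have : ∀ θ : ℝ, max (⟪(cmap θ : E2), (cmap ψ : E2)⟫ - Real.cos a) 0
      = max (Real.cos (θ - ψ) - Real.cos a) 0 := fun θ => by rw [inner_cmap]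
  simp_rw [this]
  rw [oneD ψ a ha]
  have hπ : π ≠ 0 := Real.pi_ne_zero
  field_simp

open scoped RealInnerProductSpace in
lemma cell_bound (u : Sph) {A : Set Sph} (hA : MeasurableSet A) :
    ∫ x in A, ⟪(x : E2), (u : E2)⟫ ∂sphereUniform
      ≤ Real.sin (π * (sphereUniform A).toReal) / π := by
  set m := (sphereUniform A).toReal with hm
  have hm0 : 0 ≤ m := ENNReal.toReal_nonneg
  have hm1 : m ≤ 1 := by
    rw [hm]
    exact ENNReal.toReal_le_of_le_ofReal zero_le_one (by simpa using prob_le_one (μ := sphereUniform) (s := A))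
  set a := π * m with hadef
  have ha : a ∈ Icc 0 π := ⟨by positivity, by
    rw [hadef]; nlinarith [Real.pi_pos]⟩
  have hcontφ : Continuous fun x : Sph => max (⟪(x : E2), (u : E2)⟫ - Real.cos a) 0 :=
    ((cont_inner_u u).sub continuous_const).max continuous_const
  have hintφ : Integrable (fun x : Sph => max (⟪(x : E2), (u : E2)⟫ - Real.cos a) 0)
      sphereUniform := by
    refine integrable_bounded hcontφ.aestronglyMeasurable (C := 2) fun x => ?_
    have h1 := abs_inner_le_one u x
    have h2 : |Real.cos a| ≤ 1 := Real.abs_cos_le_one a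
    rw [abs_le]; constructor
    · have := le_max_right (⟪(x : E2), (u : E2)⟫ - Real.cos a) 0; linarith
    · rw [max_le_iff]; constructor
      · rw [abs_le] at h1 h2; linarith
      · norm_num
  have hinti : Integrable (fun x : Sph => ⟪(x : E2), (u : E2)⟫) sphereUniform :=
    integrable_bounded (cont_inner_u u).aestronglyMeasurable (abs_inner_le_one u)
  have step1 : ∫ x in A, ⟪(x : E2), (u : E2)⟫ ∂sphereUniform
      ≤ ∫ x in A, (max (⟪(x : E2), (u : E2)⟫ - Real.cos a) 0 + Real.cos a) ∂sphereUniform := by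
    refine setIntegral_mono_on hinti.integrableOn
      (hintφ.integrableOn.add (integrableOn_const (measure_ne_top _ _))) hA
      fun x _ => ?_
    have := le_max_left (⟪(x : E2), (u : E2)⟫ - Real.cos a) 0
    linarith
  have step2 : ∫ x in A, (max (⟪(x : E2), (u : E2)⟫ - Real.cos a) 0 + Real.cos a) ∂sphereUniform
      = (∫ x in A, max (⟪(x : E2), (u : E2)⟫ - Real.cos a) 0 ∂sphereUniform) + m * Real.cos a := by
    rw [integral_add hintφ.integrableOn (integrableOn_const (measure_ne_top _ _))]
    rw [setIntegral_const, smul_eq_mul, Measure.real_def, ← hm]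
  have step3 : ∫ x in A, max (⟪(x : E2), (u : E2)⟫ - Real.cos a) 0 ∂sphereUniform
      ≤ ∫ x, max (⟪(x : E2), (u : E2)⟫ - Real.cos a) 0 ∂sphereUniform := by
    refine setIntegral_le_integral hintφ (ae_of_all _ fun x => le_max_right _ _)
  have step4 := sphere_pos_part u a ha
  have hπ : (0:ℝ) < π := Real.pi_pos
  calc ∫ x in A, ⟪(x : E2), (u : E2)⟫ ∂sphereUniform
      ≤ (∫ x, max (⟪(x : E2), (u : E2)⟫ - Real.cos a) 0 ∂sphereUniform) + m * Real.cos a := by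
        rw [step2] at step1; linarith
    _ = (Real.sin a - a * Real.cos a) / π + m * Real.cos a := by rw [step4]
    _ = Real.sin (π * m) / π := by
        rw [hadef]; field_simp; ring

/-- Core lower bound of Theorem 3: for `X` uniform on the unit circle, any `L`-level
encoder `f` and any decoder `g` with reconstructions on the unit circle satisfy
`E[‖X - g(f(X))‖²] ≥ 2 - 2 sin(π/L)/(π/L)`. -/
theorem unit_circle_quantizer_lower_bound (L : ℕ) (hL : 1 ≤ L)
    {Ω : Type*} [MeasurableSpace Ω] (μ : Measure Ω) [IsProbabilityMeasure μ]
    (X : Ω → sphere (0 : EuclideanSpace ℝ (Fin 2)) 1) (hXm : Measurable X)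
    (hX : Measure.map X μ = sphereUniform)
    (f : sphere (0 : EuclideanSpace ℝ (Fin 2)) 1 → Fin L) (hf : Measurable f)
    (g : Fin L → sphere (0 : EuclideanSpace ℝ (Fin 2)) 1) :
    2 - 2 * (Real.sin (π / L) / (π / L))
      ≤ ∫ ω, ‖(X ω : EuclideanSpace ℝ (Fin 2)) - (g (f (X ω)) : EuclideanSpace ℝ (Fin 2))‖ ^ 2 ∂μ := by
  have hLpos : (0:ℝ) < L := by exact_mod_cast hL
  have hπ : (0:ℝ) < π := Real.pi_pos
  have hq : Measurable fun x : Sph => (g (f x) : E2) :=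
    measurable_subtype_coe.comp ((measurable_of_countable g).comp hf)
  have hmeas : Measurable fun x : Sph => ⟪(x : E2), (g (f x) : E2)⟫ :=
    Measurable.inner measurable_subtype_coe hq
  have hintegrand_meas : Measurable fun x : Sph => ‖(x : E2) - (g (f x) : E2)‖ ^ 2 :=
    (measurable_subtype_coe.sub hq).norm.pow_const 2
  have hmap : ∫ ω, ‖(X ω : E2) - (g (f (X ω)) : E2)‖ ^ 2 ∂μ
      = ∫ x, ‖(x : E2) - (g (f x) : E2)‖ ^ 2 ∂sphereUniform := by
    rw [← hX, integral_map hXm.aemeasurable hintegrand_meas.aestronglyMeasurable]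
  have hpt : ∀ x : Sph, ‖(x : E2) - (g (f x) : E2)‖ ^ 2
      = 2 - 2 * ⟪(x : E2), (g (f x) : E2)⟫ := by
    intro x
    rw [norm_sub_sq_real]
    have hx : ‖(x:E2)‖ = 1 := by simpa using x.2
    have hy : ‖(g (f x) : E2)‖ = 1 := by simpa using (g (f x)).2
    rw [hx, hy]; ring
  have hIint : Integrable (fun x : Sph => ⟪(x : E2), (g (f x) : E2)⟫) sphereUniform :=
    integrable_bounded hmeas.aestronglyMeasurable (fun x => abs_inner_le_one (g (f x)) x)
  have hsplit : ∫ x, ‖(x : E2) - (g (f x) : E2)‖ ^ 2 ∂sphereUniform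
      = 2 - 2 * ∫ x, ⟪(x : E2), (g (f x) : E2)⟫ ∂sphereUniform := by
    rw [integral_congr_ae (ae_of_all _ hpt), integral_sub (integrable_const 2)
      (hIint.const_mul 2), integral_const, integral_const_mul]
    simp
  -- decompose into cells
  have hcellm : ∀ i : Fin L, MeasurableSet (f ⁻¹' {i}) :=
    fun i => hf (measurableSet_singleton i)
  have hsum : ∫ x, ⟪(x : E2), (g (f x) : E2)⟫ ∂sphereUniform
      = ∑ i : Fin L, ∫ x in f ⁻¹' {i}, ⟪(x : E2), (g i : E2)⟫ ∂sphereUniform := by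
    have hpt2 : ∀ x : Sph, ⟪(x : E2), (g (f x) : E2)⟫
        = ∑ i : Fin L, (f ⁻¹' {i}).indicator (fun x : Sph => ⟪(x : E2), (g i : E2)⟫) x := by
      intro x
      rw [Finset.sum_eq_single (f x)]
      · rw [indicator_of_mem (show x ∈ f ⁻¹' {f x} from rfl)]
      · intro i _ hne
        exact indicator_of_notMem (fun h => hne ((show f x = i by simpa using h).symm)) _
      · intro h; exact absurd (Finset.mem_univ _) h
    rw [integral_congr_ae (ae_of_all _ hpt2), integral_finset_sum]
    · exact Finset.sum_congr rfl fun i _ => integral_indicator (hcellm i)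
    · intro i _
      exact (integrable_bounded (Measurable.inner measurable_subtype_coe
        measurable_const).aestronglyMeasurable (fun x => abs_inner_le_one (g i) x)).indicator
        (hcellm i)
  set mfun : Fin L → ℝ := fun i => (sphereUniform (f ⁻¹' {i})).toReal with hmfun
  have hm0 : ∀ i, 0 ≤ mfun i := fun i => ENNReal.toReal_nonneg
  have hm1 : ∀ i, mfun i ≤ 1 := fun i => by
    rw [hmfun]
    exact ENNReal.toReal_le_of_le_ofReal zero_le_one
      (by simpa using prob_le_one (μ := sphereUniform) (s := f ⁻¹' {i}))
  have hmsum : ∑ i : Fin L, mfun i = 1 := by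
    have hdisj : Pairwise (Function.onFun Disjoint fun i : Fin L => f ⁻¹' {i}) := by
      intro i j hij
      exact Set.disjoint_left.2 fun x hxi hxj => hij ((mem_preimage.1 hxi).symm.trans
        (mem_preimage.1 hxj))
    have hunion : (⋃ i : Fin L, f ⁻¹' {i}) = univ :=
      eq_univ_of_forall fun x => mem_iUnion.2 ⟨f x, rfl⟩
    have h1 : ∑ i : Fin L, sphereUniform (f ⁻¹' {i}) = 1 := by
      rw [← tsum_fintype (L := .unconditional _), ← measure_iUnion hdisj hcellm, hunion, measure_univ]
    rw [hmfun, ← ENNReal.toReal_sum (fun i _ => measure_ne_top _ _), h1, ENNReal.toReal_one]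
  have hbound : ∀ i : Fin L, ∫ x in f ⁻¹' {i}, ⟪(x : E2), (g i : E2)⟫ ∂sphereUniform
      ≤ Real.sin (π * mfun i) / π := fun i => cell_bound (g i) (hcellm i)
  have hjensen : ∑ i : Fin L, Real.sin (π * mfun i) ≤ L * Real.sin (π / L) := by
    have hconc : ConcaveOn ℝ (Icc 0 π) Real.sin := strictConcaveOn_sin_Icc.concaveOn
    have hLne : (L:ℝ) ≠ 0 := ne_of_gt hLpos
    have hj := hconc.le_map_sum (t := Finset.univ) (w := fun _ : Fin L => (L:ℝ)⁻¹)
      (p := fun i => π * mfun i) (fun i _ => by positivity)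
      (by simp [Finset.sum_const, Finset.card_univ, nsmul_eq_mul, mul_inv_cancel₀ hLne])
      (fun i _ => ⟨by positivity, by show π * mfun i ≤ π; nlinarith [hm1 i, hm0 i, hπ]⟩)
    have hrhs : ∑ i : Fin L, (L:ℝ)⁻¹ • (π * mfun i) = π / L := by
      rw [← Finset.smul_sum, ← Finset.mul_sum, hmsum, mul_one, smul_eq_mul]
      field_simp
    rw [hrhs] at hj
    have hlhs : ∑ i : Fin L, (L:ℝ)⁻¹ • Real.sin (π * mfun i)
        = (L:ℝ)⁻¹ * ∑ i : Fin L, Real.sin (π * mfun i) := by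
      rw [← Finset.smul_sum, smul_eq_mul]
    rw [hlhs] at hj
    calc ∑ i : Fin L, Real.sin (π * mfun i)
        = (L:ℝ) * ((L:ℝ)⁻¹ * ∑ i : Fin L, Real.sin (π * mfun i)) := by
          field_simp
      _ ≤ (L:ℝ) * Real.sin (π / L) := by
          exact mul_le_mul_of_nonneg_left hj hLpos.le
  have hItotal : ∫ x, ⟪(x : E2), (g (f x) : E2)⟫ ∂sphereUniform
      ≤ Real.sin (π / L) / (π / L) := by
    rw [hsum]
    calc ∑ i : Fin L, ∫ x in f ⁻¹' {i}, ⟪(x : E2), (g i : E2)⟫ ∂sphereUniform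
        ≤ ∑ i : Fin L, Real.sin (π * mfun i) / π :=
          Finset.sum_le_sum fun i _ => hbound i
      _ = (∑ i : Fin L, Real.sin (π * mfun i)) / π := by rw [Finset.sum_div]
      _ ≤ ((L:ℝ) * Real.sin (π / L)) / π := by
          gcongr
      _ = Real.sin (π / L) / (π / L) := by
          field_simp
  rw [hmap, hsplit]
  linarith [hItotal]
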